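/- Let f be a complex polynomial of degree n ≥ 2 all of whose roots lie on a vertical line of the complex plane, i.e. there exists a ∈ ℝ such that every root of f has real part a. Then f is trivial, i.e. of the form c(X - b)^n, if and only if the (n-2)nd derivative f^{(n-2)} has a double root, i.e. there exists z with f^{(n-2)}(z) = 0 and f^{(n-1)}(z) = 0. -/

import Mathlib

open Polynomial

section Helpers
open Multiset

lemma my_esymm_cons {R} [CommRing R] (a : R) (s : Multiset R) (k : ℕ) :
    (a ::ₘ s).esymm (k+1) = s.esymm (k+1) + a * s.esymm k := by
  simp only [Multiset.esymm, powersetCard_cons, Multiset.map_add, Multiset.sum_add,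
    Multiset.map_map, Function.comp_def, Multiset.prod_cons, Multiset.sum_map_mul_left]

lemma my_esymm_one {R} [CommRing R] (s : Multiset R) : s.esymm 1 = s.sum := by
  induction s using Multiset.induction with
  | empty => simp [Multiset.esymm, powersetCard_zero_right]
  | cons a s ih =>
    rw [show (1:ℕ) = 0+1 from rfl, my_esymm_cons, ih, Multiset.sum_cons]
    simp [Multiset.esymm]
    ring

lemma my_sq_sum {R} [CommRing R] (s : Multiset R) :
    s.sum ^ 2 = (s.map (· ^ 2)).sum + 2 * s.esymm 2 := by
  induction s using Multiset.induction with
  | empty => simp [Multiset.esymm, powersetCard_zero_right]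
  | cons a s ih =>
    rw [Multiset.sum_cons, show (2:ℕ) = 1+1 from rfl, my_esymm_cons, my_esymm_one,
      Multiset.map_cons, Multiset.sum_cons]
    linear_combination ih

lemma my_sum_const_sub (M : Multiset ℂ) (u : ℝ) :
    (M.map (fun r => u - r.im^2)).sum
      = (Multiset.card M) * u - ((M.map Complex.im).map (fun x => x^2)).sum := by
  induction M using Multiset.induction with
  | empty => simp
  | cons r s ih =>
    simp only [Multiset.map_cons, Multiset.sum_cons, Multiset.card_cons, ih]
    push_cast
    ring

lemma my_sum_sq_dev (N : Multiset ℝ) (t : ℝ) :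
    (N.map (fun x => (x - t)^2)).sum
      = (N.map (fun x => x^2)).sum - 2*t*N.sum + (Multiset.card N)*t^2 := by
  induction N using Multiset.induction with
  | empty => simp
  | cons r s ih =>
    simp only [Multiset.map_cons, Multiset.sum_cons, Multiset.card_cons, ih]
    push_cast
    ring

lemma my_re_sum (M : Multiset ℂ) : M.sum.re = (M.map Complex.re).sum :=
  Complex.reAddGroupHom.map_multiset_sum M

lemma my_im_sum (M : Multiset ℂ) : M.sum.im = (M.map Complex.im).sum :=
  Complex.imAddGroupHom.map_multiset_sum M

end Helpers

theorem stmt9 (n : ℕ) (hn : 2 ≤ n) (f : Polynomial ℂ) (hdeg : f.natDegree = n)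
    (hline : ∃ a : ℝ, ∀ z : ℂ, f.eval z = 0 → z.re = a) :
    (∃ c b : ℂ, f = Polynomial.C c * (Polynomial.X - Polynomial.C b) ^ n) ↔
      (∃ z : ℂ, (Polynomial.derivative^[n - 2] f).eval z = 0 ∧
        (Polynomial.derivative^[n - 1] f).eval z = 0) := by
  obtain ⟨a, ha⟩ := hline
  constructor
  · rintro ⟨c, b, rfl⟩
    have key : n - (n-2) ≠ 0 ∧ n - (n-1) ≠ 0 := by omega
    refine ⟨b, ?_, ?_⟩ <;>
    · rw [Polynomial.iterate_derivative_C_mul, Polynomial.iterate_derivative_X_sub_pow]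
      simp [zero_pow key.1, zero_pow key.2]
  · rintro ⟨z, h2, h1⟩
    have hf0 : f ≠ 0 := fun h => by rw [h, natDegree_zero] at hdeg; omega
    have hc : f.leadingCoeff ≠ 0 := leadingCoeff_ne_zero.mpr hf0
    set c := f.leadingCoeff with hcdef
    have hroots : Multiset.card f.roots = f.natDegree :=
      (Polynomial.splits_iff_card_roots).mp (IsAlgClosed.splits f)
    set M := f.roots with hM
    have hcard : Multiset.card M = n := by rw [hM, hroots, hdeg]
    have hre : ∀ r ∈ M, r.re = a := fun r hr =>
      ha r ((Polynomial.mem_roots hf0).mp hr)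
    -- Vieta
    have hV1 : f.coeff (n-1) = -(c * M.esymm 1) := by
      have h := Polynomial.coeff_eq_esymm_roots_of_card hroots
        (k := n-1) (by rw [hdeg]; omega)
      rw [hdeg, show n - (n-1) = 1 by omega] at h
      rw [h]; ring
    have hV2 : f.coeff (n-2) = c * M.esymm 2 := by
      have h := Polynomial.coeff_eq_esymm_roots_of_card hroots
        (k := n-2) (by rw [hdeg]; omega)
      rw [hdeg, show n - (n-2) = 2 by omega] at h
      rw [h]; ring
    have hVn : f.coeff n = c := by rw [hcdef, ← hdeg, Polynomial.coeff_natDegree]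
    -- expand evals
    have hb2 : (derivative^[n-2] f).natDegree < 3 := by
      have := Polynomial.natDegree_iterate_derivative f (n-2)
      omega
    have hb1 : (derivative^[n-1] f).natDegree < 2 := by
      have := Polynomial.natDegree_iterate_derivative f (n-1)
      omega
    have E2 : (derivative^[n-2] f).coeff 0 + (derivative^[n-2] f).coeff 1 * z
        + (derivative^[n-2] f).coeff 2 * z^2 = 0 := by
      have h := (Polynomial.eval_eq_sum_range' hb2 z).symm.trans h2
      rw [Finset.sum_range_succ, Finset.sum_range_succ, Finset.sum_range_one] at h
      linear_combination h
    have E1 : (derivative^[n-1] f).coeff 0 + (derivative^[n-1] f).coeff 1 * z = 0 := by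
      have h := (Polynomial.eval_eq_sum_range' hb1 z).symm.trans h1
      rw [Finset.sum_range_succ, Finset.sum_range_one] at h
      linear_combination h
    simp only [Polynomial.coeff_iterate_derivative, nsmul_eq_mul] at E1 E2
    rw [show 0 + (n-2) = n-2 by omega, show 1 + (n-2) = n-1 by omega,
      show 2 + (n-2) = n by omega] at E2
    rw [show 0 + (n-1) = n-1 by omega, show 1 + (n-1) = n by omega] at E1
    -- descFactorial casts
    set F : ℂ := ((n-2).factorial : ℂ) with hF
    have hFne : F ≠ 0 := Nat.cast_ne_zero.mpr (Nat.factorial_ne_zero _)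
    have hν : (n : ℝ) ≠ 0 := Nat.cast_ne_zero.mpr (by omega)
    have hν1 : (n : ℂ) - 1 ≠ 0 :=
      sub_ne_zero.mpr (by exact_mod_cast (show n ≠ 1 by omega))
    have cast1 : (((n-2).descFactorial (n-2) : ℕ) : ℂ) = F := by
      rw [Nat.descFactorial_self]
    have cast2 : (((n-1).descFactorial (n-2) : ℕ) : ℂ) = ((n : ℂ) - 1) * F := by
      rw [Nat.descFactorial_eq_factorial_mul_choose, show n-2 = (n-1)-1 by omega,
        Nat.choose_symm (by omega), Nat.choose_one_right]
      push_cast [Nat.cast_sub (by omega : 1 ≤ n)]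
      rw [show (n-1)-1 = n-2 by omega]
      ring
    have cast4 : (((n-1).descFactorial (n-1) : ℕ) : ℂ) = ((n : ℂ) - 1) * F := by
      rw [Nat.descFactorial_self, show n-1 = (n-2)+1 by omega, Nat.factorial_succ]
      push_cast [Nat.cast_sub (by omega : 2 ≤ n)]
      ring
    have cast5 : ((n.descFactorial (n-1) : ℕ) : ℂ) = (n : ℂ) * ((n : ℂ) - 1) * F := by
      rw [Nat.descFactorial_eq_factorial_mul_choose,
        Nat.choose_symm (by omega : 1 ≤ n), Nat.choose_one_right,
        show n-1 = (n-2)+1 by omega, Nat.factorial_succ]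
      push_cast [Nat.cast_sub (by omega : 2 ≤ n)]
      ring
    have cast3 : ((n.descFactorial (n-2) : ℕ) : ℂ) * 2 = (n : ℂ) * ((n : ℂ) - 1) * F := by
      have he : 2 * (n.choose 2) = n * (n-1) := by
        have key : n * (n-1) = (n-1) * ((n-1)+1) := by
          rw [Nat.mul_comm]; congr 1; omega
        obtain ⟨m, hm⟩ := Nat.even_mul_succ_self (n-1)
        rw [Nat.choose_two_right, key, hm]
        omega
      have heC := congrArg (Nat.cast : ℕ → ℂ) he
      push_cast [Nat.cast_sub (by omega : 1 ≤ n)] at heC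
      rw [Nat.descFactorial_eq_factorial_mul_choose,
        Nat.choose_symm (by omega : 2 ≤ n)]
      push_cast
      linear_combination F * heC
    rw [cast4, cast5, hV1, hVn, my_esymm_one] at E1
    rw [cast1, cast2, hV1, hV2, hVn, my_esymm_one] at E2
    -- derive sum and power-sum relations
    have key1 : (((n:ℂ)-1) * F * c) * ((n:ℂ) * z - M.sum) = 0 := by
      linear_combination E1
    have he1 : M.sum = (n:ℂ) * z := by
      rcases mul_eq_zero.mp key1 with h | h
      · exact absurd h (mul_ne_zero (mul_ne_zero hν1 hFne) hc)
      · linear_combination -h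
    rw [he1] at E2
    have key2 : (F * c) * (2 * M.esymm 2 - (n:ℂ)*((n:ℂ)-1) * z^2) = 0 := by
      linear_combination 2 * E2 - (c * z^2) * cast3
    have hs2 : 2 * M.esymm 2 = (n:ℂ)*((n:ℂ)-1)*z^2 := by
      rcases mul_eq_zero.mp key2 with h | h
      · exact absurd h (mul_ne_zero hFne hc)
      · linear_combination h
    have hp2 : ((M.map (· ^ 2)).sum : ℂ) = (n:ℂ) * z^2 := by
      linear_combination -(my_sq_sum M) + (M.sum + (n:ℂ)*z) * he1 - hs2
    -- real parts
    have hresum : M.sum.re = n * a := by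
      rw [my_re_sum]
      have hrep : M.map Complex.re = Multiset.replicate n a := by
        rw [Multiset.eq_replicate]
        refine ⟨by rw [Multiset.card_map, hcard], fun b hb => ?_⟩
        obtain ⟨r, hr, rfl⟩ := Multiset.mem_map.mp hb
        exact hre r hr
      rw [hrep, Multiset.sum_replicate, nsmul_eq_mul]
    have hzre : z.re = a := by
      have him := congrArg Complex.re he1
      rw [hresum] at him
      simp only [Complex.mul_re, Complex.natCast_re, Complex.natCast_im,
        zero_mul, sub_zero] at him
      exact mul_left_cancel₀ hν him.symm
    set t := z.im with ht
    have himsum : (M.map Complex.im).sum = n * t := by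
      have h := congrArg Complex.im he1
      rw [my_im_sum] at h
      simpa [Complex.mul_im] using h
    have hSim : ((M.map Complex.im).map (fun x => x^2)).sum = n * t^2 := by
      have hre2 := congrArg Complex.re hp2
      rw [my_re_sum (M.map (· ^ 2)), Multiset.map_map] at hre2
      have hmc : M.map (Complex.re ∘ (· ^ 2)) = M.map (fun r => a^2 - r.im^2) :=
        Multiset.map_congr rfl (fun r hr => by
          have hr' := hre r hr
          simp only [Function.comp_apply, pow_two, Complex.mul_re, hr']
          try ring)
      rw [hmc, my_sum_const_sub, hcard] at hre2
      have hrhs : ((n:ℂ) * z^2).re = n * a^2 - n * t^2 := by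
        simp only [Complex.mul_re, Complex.natCast_re, Complex.natCast_im, zero_mul,
          sub_zero, pow_two, Complex.mul_im, ← ht, hzre]
        try ring
      rw [hrhs] at hre2
      linarith
    have hS : ((M.map Complex.im).map (fun x => (x - t)^2)).sum = 0 := by
      rw [my_sum_sq_dev, hSim, himsum, Multiset.card_map, hcard]
      ring
    have hall : ∀ r ∈ M, r = z := by
      intro r hr
      have hmem : (r.im - t)^2 ∈ (M.map Complex.im).map (fun x => (x - t)^2) :=
        Multiset.mem_map.mpr ⟨r.im, Multiset.mem_map.mpr ⟨r, hr, rfl⟩, rfl⟩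
      have h0 := Multiset.all_zero_of_le_zero_le_of_sum_eq_zero
        (fun x hx => by
          obtain ⟨y, _, rfl⟩ := Multiset.mem_map.mp hx
          positivity) hS _ hmem
      have him : r.im = t := by nlinarith [sq_nonneg (r.im - t)]
      exact Complex.ext (by rw [hre r hr, hzre]) him
    refine ⟨c, z, ?_⟩
    have hrep : M = Multiset.replicate n z := Multiset.eq_replicate.mpr ⟨hcard, hall⟩
    conv_lhs => rw [← Polynomial.C_leadingCoeff_mul_prod_multiset_X_sub_C hroots]
    rw [← hM, hrep, Multiset.map_replicate, Multiset.prod_replicate]
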